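/- Let d ≥ 1 and suppose that for every ε > 0 there exists C_ε > 0 such that for all k: max_α λ_α^{(k)} ≤ C_ε · (min_α λ_α^{(k)}) · ‖Q(k)‖^ε, and suppose moreover that for all k: max_α λ_α^{(k)} ≥ (min_α λ_α^{(k+1)}) · ‖Z(k+1)‖/(2d), that for each k there is an index α₀ with λ_{α₀}^{(k)} = λ_{α₀}^{(k+1)}, and that ‖Q(k)‖ ≤ ‖Q(k+1)‖. Then for every ε > 0 there exists C'_ε > 0 such that ‖Z(k+1)‖ ≤ C'_ε · ‖Q(k+1)‖^{2ε} for all k. -/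

import Mathlib

open Finset

/-- converse direction of the proposition relating condition (a)
to balance of the interval lengths. All matrix norms are abstracted as the
real-valued functions `nZ k = ‖Z k‖` and `nQ k = ‖Q k‖`. -/
theorem stmt2 {d : ℕ} (hd : 1 ≤ d)
    (lam : ℕ → Fin d → ℝ) (hlam : ∀ k i, 0 < lam k i)
    (nZ nQ : ℕ → ℝ) (hnZ : ∀ k, 0 < nZ k) (hnQ : ∀ k, 1 ≤ nQ k)
    (hne : (univ : Finset (Fin d)).Nonempty)
    (hbal : ∀ ε : ℝ, 0 < ε → ∃ C : ℝ, 0 < C ∧ ∀ k,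
      univ.sup' hne (lam k) ≤ C * univ.inf' hne (lam k) * (nQ k) ^ ε)
    (hstep : ∀ k, univ.inf' hne (lam (k + 1)) * nZ (k + 1) / (2 * d) ≤
      univ.sup' hne (lam k))
    (hfix : ∀ k, ∃ α₀ : Fin d, lam k α₀ = lam (k + 1) α₀)
    (hmono : ∀ k, nQ k ≤ nQ (k + 1)) :
    ∀ ε : ℝ, 0 < ε → ∃ C' : ℝ, 0 < C' ∧ ∀ k,
      nZ (k + 1) ≤ C' * (nQ (k + 1)) ^ (2 * ε) := by
  intro ε hε
  obtain ⟨C, hC, hCk⟩ := hbal ε hε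
  have hinf : ∀ k, 0 < univ.inf' hne (lam k) := by
    intro k
    exact (Finset.lt_inf'_iff hne).mpr fun i _ => hlam k i
  have hdpos : (0:ℝ) < d := by exact_mod_cast Nat.lt_of_lt_of_le Nat.zero_lt_one hd
  refine ⟨2 * d * C ^ 2, by positivity, fun k => ?_⟩
  set A := (nQ (k+1)) ^ ε with hA
  have hApos : 0 < A := Real.rpow_pos_of_pos (lt_of_lt_of_le one_pos (hnQ (k+1))) ε
  have hQk : (nQ k) ^ ε ≤ A := by
    exact Real.rpow_le_rpow (le_trans zero_le_one (hnQ k)) (hmono k) hε.le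
  -- inf λ(k) ≤ sup λ(k+1) via the fixed index
  obtain ⟨α₀, hα₀⟩ := hfix k
  have h1 : univ.inf' hne (lam k) ≤ univ.sup' hne (lam (k+1)) := by
    calc univ.inf' hne (lam k) ≤ lam k α₀ := inf'_le _ (mem_univ α₀)
      _ = lam (k+1) α₀ := hα₀
      _ ≤ univ.sup' hne (lam (k+1)) := le_sup' _ (mem_univ α₀)
  have h2 : univ.sup' hne (lam (k+1)) ≤ C * univ.inf' hne (lam (k+1)) * A := hCk (k+1)
  have h3 : univ.sup' hne (lam k) ≤ C * (C * univ.inf' hne (lam (k+1)) * A) * A := by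
    calc univ.sup' hne (lam k) ≤ C * univ.inf' hne (lam k) * (nQ k) ^ ε := hCk k
      _ ≤ C * (C * univ.inf' hne (lam (k+1)) * A) * (nQ k) ^ ε := by
          apply mul_le_mul_of_nonneg_right _ (Real.rpow_nonneg (le_trans zero_le_one (hnQ k)) ε)
          exact mul_le_mul_of_nonneg_left (h1.trans h2) hC.le
      _ ≤ C * (C * univ.inf' hne (lam (k+1)) * A) * A := by
          exact mul_le_mul_of_nonneg_left hQk
            (mul_nonneg hC.le (mul_nonneg (mul_nonneg hC.le (hinf _).le) hApos.le))
  have h4 := (hstep k).trans h3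
  have hrw : (nQ (k+1)) ^ (2 * ε) = A * A := by
    rw [two_mul, Real.rpow_add (lt_of_lt_of_le one_pos (hnQ (k+1)))]
  rw [hrw]
  have hinf1 := hinf (k+1)
  rw [div_le_iff₀ (by positivity)] at h4
  have := (mul_le_mul_iff_right₀ hinf1).mp (by nlinarith [h4] : univ.inf' hne (lam (k+1)) * nZ (k+1) ≤ univ.inf' hne (lam (k+1)) * (2 * d * C ^ 2 * (A * A)))
  exact this
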